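/- The restriction of the map Ψ : P(n) → Luk(n) to the set NC(n) of non-crossing partitions is a bijection from NC(n) onto Luk(n). -/

import Mathlib

/-- `P` is a partition of `{1,...,n}` (modelled on `Fin n`). -/
def IsPartition {n : ℕ} (P : Finset (Finset (Fin n))) : Prop :=
  ∅ ∉ P ∧ ∀ a : Fin n, ∃! V, V ∈ P ∧ a ∈ V

/-- `P` is non-crossing: there are no distinct blocks `V, W` and `a < b < c < d`
with `a, c ∈ V` and `b, d ∈ W`. -/
def IsNC {n : ℕ} (P : Finset (Finset (Fin n))) : Prop :=
  ¬ ∃ V ∈ P, ∃ W ∈ P, V ≠ W ∧ ∃ a b c d : Fin n,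
    a < b ∧ b < c ∧ c < d ∧ a ∈ V ∧ c ∈ V ∧ b ∈ W ∧ d ∈ W

/-- The block of `P` containing `m` (the union of the blocks containing `m`;
for a partition this is the unique block containing `m`). -/
def blockOf {n : ℕ} (P : Finset (Finset (Fin n))) (m : Fin n) : Finset (Fin n) :=
  (P.filter (fun V => m ∈ V)).sup id

/-- The map `Ψ`, sending a partition to the rise-vector with `q m = |V| - 1` when
`m = min V` for a block `V`, and `q m = -1` otherwise. -/
def Psi {n : ℕ} (P : Finset (Finset (Fin n))) : Fin n → ℤ :=
  fun m => if ∀ x ∈ blockOf P m, m ≤ x then ((blockOf P m).card : ℤ) - 1 else -1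

open Finset

/-- Partial sum of the first `k` entries of `q`. -/
def Ssum (q : Fin n → ℤ) (k : ℕ) : ℤ :=
  ∑ i ∈ Finset.univ.filter (fun i : Fin n => (i : ℕ) < k), q i

lemma Ssum_zero (q : Fin n → ℤ) : Ssum q 0 = 0 := by
  simp [Ssum]

lemma Ssum_succ (q : Fin n → ℤ) {k : ℕ} (hk : k < n) :
    Ssum q (k + 1) = Ssum q k + q ⟨k, hk⟩ := by
  unfold Ssum
  rw [show Finset.univ.filter (fun i : Fin n => (i : ℕ) < k + 1)
      = insert ⟨k, hk⟩ (Finset.univ.filter (fun i : Fin n => (i : ℕ) < k)) from ?_,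
    Finset.sum_insert (by simp)]
  · ring
  · ext i
    simp [Nat.lt_succ_iff_lt_or_eq, Fin.ext_iff, or_comm]
    omega

lemma Ssum_le_eq (q : Fin n → ℤ) (m : Fin n) :
    ∑ i ∈ Finset.univ.filter (fun i => i ≤ m), q i = Ssum q (m.val + 1) := by
  unfold Ssum
  congr 1
  ext i
  simp only [Finset.mem_filter, Finset.mem_univ, true_and, Nat.lt_succ_iff, Fin.le_def]

lemma Ssum_top (q : Fin n → ℤ) : Ssum q n = ∑ i, q i := by
  unfold Ssum
  congr 1
  ext i
  simp [i.isLt]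

/-- `q` is (the rise-vector of) a Lukasiewicz path. -/
def Luk (q : Fin n → ℤ) : Prop :=
  (∀ i, -1 ≤ q i) ∧ (∀ m : Fin n, 0 ≤ Ssum q (m.val + 1)) ∧ Ssum q n = 0

lemma Luk_iff (q : Fin n → ℤ) :
    Luk q ↔ (∀ i, -1 ≤ q i) ∧
      (∀ m : Fin n, 0 ≤ ∑ i ∈ Finset.univ.filter (fun i => i ≤ m), q i) ∧
      ∑ i, q i = 0 := by
  unfold Luk
  rw [← Ssum_top]
  simp only [Ssum_le_eq]

lemma Luk.S_nonneg {q : Fin n → ℤ} (hq : Luk q) {k : ℕ} (hk : k ≤ n) :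
    0 ≤ Ssum q k := by
  rcases k with _ | m
  · simp [Ssum_zero]
  · exact hq.2.1 ⟨m, by omega⟩

-- candidates for the block-minimum of x
def Fset (q : Fin n → ℤ) (x : Fin n) : Finset (Fin n) :=
  Finset.univ.filter (fun m => m ≤ x ∧ Ssum q m.val ≤ Ssum q x.val ∧
    Ssum q m.val ≤ Ssum q (x.val + 1))

/-- The minimum of the block of `x` in the partition reconstructed from `q`. -/
def fmin (q : Fin n → ℤ) (x : Fin n) : Fin n :=
  if h : (Fset q x).Nonempty then (Fset q x).max' h else x

lemma Luk.q_neg {q : Fin n → ℤ} (hq : Luk q) {x : Fin n} (hx : ¬ 0 ≤ q x) :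
    q x = -1 := by
  have := hq.1 x; omega

lemma Luk.Fset_nonempty {q : Fin n → ℤ} (hq : Luk q) (x : Fin n) :
    (Fset q x).Nonempty := by
  refine ⟨⟨0, x.pos⟩, ?_⟩
  simp only [Fset, Finset.mem_filter, Finset.mem_univ, true_and]
  refine ⟨by simp [Fin.le_def], ?_, ?_⟩
  · rw [Ssum_zero]; exact hq.S_nonneg (by omega)
  · rw [Ssum_zero]; exact hq.S_nonneg (by omega)

lemma Luk.fmin_mem {q : Fin n → ℤ} (hq : Luk q) (x : Fin n) :
    fmin q x ∈ Fset q x := by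
  rw [fmin, dif_pos (hq.Fset_nonempty x)]
  exact Finset.max'_mem _ _

lemma Luk.fmin_le {q : Fin n → ℤ} (hq : Luk q) (x : Fin n) : fmin q x ≤ x := by
  have := hq.fmin_mem x
  simp only [Fset, Finset.mem_filter] at this
  exact this.2.1

lemma Luk.fmin_S_le {q : Fin n → ℤ} (hq : Luk q) (x : Fin n) :
    Ssum q (fmin q x).val ≤ Ssum q (x.val + 1) := by
  have := hq.fmin_mem x
  simp only [Fset, Finset.mem_filter] at this
  exact this.2.2.2

lemma Luk.le_fmin {q : Fin n → ℤ} (hq : Luk q) {x y : Fin n} (hy : y ∈ Fset q x) :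
    y ≤ fmin q x := by
  rw [fmin, dif_pos (hq.Fset_nonempty x)]
  exact Finset.le_max' _ _ hy

lemma Luk.fmin_eq_self {q : Fin n → ℤ} (hq : Luk q) {x : Fin n} (hx : 0 ≤ q x) :
    fmin q x = x := by
  have hmem : x ∈ Fset q x := by
    simp only [Fset, Finset.mem_filter, Finset.mem_univ, true_and]
    refine ⟨le_refl x, le_refl _, ?_⟩
    rw [Ssum_succ q x.isLt]
    simp only [Fin.eta]
    omega
  exact le_antisymm (hq.fmin_le x) (hq.le_fmin hmem)

lemma Luk.fmin_lt {q : Fin n → ℤ} (hq : Luk q) {x : Fin n} (hx : ¬ 0 ≤ q x) :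
    fmin q x < x := by
  rcases lt_or_eq_of_le (hq.fmin_le x) with h | h
  · exact h
  · exfalso
    have := hq.fmin_mem x
    rw [h] at this
    simp only [Fset, Finset.mem_filter, Finset.mem_univ, true_and] at this
    have h2 := this.2.2
    rw [Ssum_succ q x.isLt] at h2
    simp only [Fin.eta] at h2
    omega

lemma Luk.S_between {q : Fin n → ℤ} (hq : Luk q) {x y : Fin n} (hx : q x = -1)
    (h1 : fmin q x < y) (h2 : y ≤ x) : Ssum q (x.val + 1) < Ssum q y.val := by
  by_contra hcon
  push_neg at hcon
  have hy : y ∈ Fset q x := by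
    simp only [Fset, Finset.mem_filter, Finset.mem_univ, true_and]
    refine ⟨h2, ?_, hcon⟩
    have : Ssum q (x.val + 1) = Ssum q x.val + q x := by
      rw [Ssum_succ q x.isLt]
    omega
  exact absurd (hq.le_fmin hy) (not_le.mpr h1)

lemma Luk.q_fmin_nonneg {q : Fin n → ℤ} (hq : Luk q) (x : Fin n) :
    0 ≤ q (fmin q x) := by
  by_cases hx : 0 ≤ q x
  · rwa [hq.fmin_eq_self hx]
  · have hq1 : q x = -1 := hq.q_neg hx
    have hlt : fmin q x < x := hq.fmin_lt hx
    have hn : (fmin q x).val + 1 < n := by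
      have := x.isLt
      have := Fin.lt_def.mp hlt
      omega
    have hbtw := hq.S_between hq1 (x := x) (y := ⟨(fmin q x).val + 1, hn⟩)
      (by simp [Fin.lt_def]) (by simp [Fin.le_def]; omega)
    have hS := hq.fmin_S_le x
    have hstep : Ssum q ((fmin q x).val + 1)
        = Ssum q (fmin q x).val + q (fmin q x) := by
      rw [Ssum_succ q (by omega)]
    simp only at hbtw
    omega

lemma Luk.fmin_idem {q : Fin n → ℤ} (hq : Luk q) (x : Fin n) :
    fmin q (fmin q x) = fmin q x :=
  hq.fmin_eq_self (hq.q_fmin_nonneg x)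

/-- The non-crossing partition reconstructed from a path `q`: fibers of `fmin`. -/
def Phi (q : Fin n → ℤ) : Finset (Finset (Fin n)) :=
  Finset.univ.image (fun x => Finset.univ.filter (fun y => fmin q y = fmin q x))

lemma Luk.Phi_isPartition {q : Fin n → ℤ} (hq : Luk q) : IsPartition (Phi q) := by
  constructor
  · intro h
    simp only [Phi, Finset.mem_image] at h
    obtain ⟨x, -, hx⟩ := h
    have : x ∈ (∅ : Finset (Fin n)) := by
      rw [← hx]; simp
    simp at this
  · intro a
    refine ⟨Finset.univ.filter (fun y => fmin q y = fmin q a), ⟨?_, ?_⟩, ?_⟩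
    · exact Finset.mem_image.mpr ⟨a, Finset.mem_univ a, rfl⟩
    · simp
    · rintro V ⟨hV, haV⟩
      simp only [Phi, Finset.mem_image] at hV
      obtain ⟨x, -, hx⟩ := hV
      subst hx
      simp only [Finset.mem_filter, Finset.mem_univ, true_and] at haV
      ext y
      simp [haV]

lemma Luk.Phi_isNC {q : Fin n → ℤ} (hq : Luk q) : IsNC (Phi q) := by
  rintro ⟨V, hV, W, hW, hVW, a, b, c, d, hab, hbc, hcd, haV, hcV, hbW, hdW⟩
  simp only [Phi, Finset.mem_image] at hV hW
  obtain ⟨x, -, hx⟩ := hV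
  obtain ⟨y, -, hy⟩ := hW
  subst hx; subst hy
  simp only [Finset.mem_filter, Finset.mem_univ, true_and] at haV hcV hbW hdW
  set v := fmin q x with hv
  set w := fmin q y with hw
  have hvw : v ≠ w := by
    intro h
    apply hVW
    ext z
    simp [← hv, ← hw, h]
  have hva : v ≤ a := haV ▸ hq.fmin_le a
  have hwb : w ≤ b := hbW ▸ hq.fmin_le b
  -- c and d are not minima of their blocks
  have hqc : q c = -1 := by
    apply hq.q_neg
    intro h
    have := hq.fmin_eq_self h
    rw [hcV] at this
    exact absurd (this ▸ le_trans hva (le_of_lt hab) : c ≤ b) (not_le.mpr hbc)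
  have hqd : q d = -1 := by
    apply hq.q_neg
    intro h
    have := hq.fmin_eq_self h
    rw [hdW] at this
    exact absurd (this ▸ le_trans hwb (le_of_lt hbc) : d ≤ c) (not_le.mpr hcd)
  rcases lt_or_gt_of_ne hvw with hlt | hgt
  · -- v < w : use S w ≤ S (d+1) < S (c+1) < S w
    have h1 : Ssum q (c.val + 1) < Ssum q w.val := by
      apply hq.S_between hqc (hcV ▸ hlt) (le_trans hwb (le_of_lt hbc))
    have h2 : Ssum q w.val ≤ Ssum q (d.val + 1) := by
      have := hq.fmin_S_le d; rwa [hdW] at this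
    have hcn : c.val + 1 < n := by have := d.isLt; have := Fin.lt_def.mp hcd; omega
    have h3 : Ssum q (d.val + 1) < Ssum q (c.val + 1) := by
      have := hq.S_between hqd (x := d) (y := ⟨c.val + 1, hcn⟩)
        (by rw [hdW] at *; simp only [Fin.lt_def]; have := Fin.le_def.mp hwb;
            have := Fin.lt_def.mp hbc; omega)
        (by simp only [Fin.le_def]; exact Fin.lt_def.mp hcd)
      simpa using this
    omega
  · -- w < v : S v ≤ S (c+1) < S (b+1) < S v
    have hqb : q b = -1 := by
      apply hq.q_neg
      intro h
      have hb := hq.fmin_eq_self h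
      rw [hbW] at hb
      have hwb2 : w < b := lt_of_lt_of_le hgt (le_trans hva (le_of_lt hab))
      exact absurd hb (ne_of_lt hwb2)
    have h1 : Ssum q (b.val + 1) < Ssum q v.val := by
      apply hq.S_between hqb (hbW ▸ hgt) (le_trans hva (le_of_lt hab))
    have h2 : Ssum q v.val ≤ Ssum q (c.val + 1) := by
      have := hq.fmin_S_le c; rwa [hcV] at this
    have hbn : b.val + 1 < n := by have := c.isLt; have := Fin.lt_def.mp hbc; omega
    have h3 : Ssum q (c.val + 1) < Ssum q (b.val + 1) := by
      have := hq.S_between hqc (x := c) (y := ⟨b.val + 1, hbn⟩)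
        (by rw [hcV] at *; simp only [Fin.lt_def]; have := Fin.le_def.mp hva;
            have := Fin.lt_def.mp hab; omega)
        (by simp only [Fin.le_def]; exact Fin.lt_def.mp hbc)
      simpa using this
    omega

lemma blockOf_eq {P : Finset (Finset (Fin n))} (hP : IsPartition P) {m : Fin n}
    {V : Finset (Fin n)} (hV : V ∈ P) (hm : m ∈ V) : blockOf P m = V := by
  have hfil : P.filter (fun W => m ∈ W) = {V} := by
    ext W
    simp only [Finset.mem_filter, Finset.mem_singleton]
    constructor
    · rintro ⟨hW, hmW⟩
      exact (hP.2 m).unique ⟨hW, hmW⟩ ⟨hV, hm⟩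
    · rintro rfl; exact ⟨hV, hm⟩
  rw [blockOf, hfil]
  simp

lemma Luk.card_fiber {q : Fin n → ℤ} (hq : Luk q) {m : Fin n} (hm0 : 0 ≤ q m) :
    ((Finset.univ.filter (fun x => fmin q x = m)).card : ℤ) = q m + 1 := by
  classical
  have hfm : fmin q m = m := hq.fmin_eq_self hm0
  set fiber := Finset.univ.filter (fun x => fmin q x = m) with hfib
  have hmfib : m ∈ fiber := by simp [hfib, hfm]
  have hSm1 : Ssum q (m.val + 1) = Ssum q m.val + q m := by
    rw [Ssum_succ q m.isLt]
  -- basic facts about elements of the fiber other than m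
  have hfacts : ∀ x ∈ fiber.erase m, m < x ∧ q x = -1 ∧
      Ssum q m.val ≤ Ssum q (x.val + 1) ∧ Ssum q (x.val + 1) < Ssum q m.val + q m := by
    intro x hx
    rw [Finset.mem_erase] at hx
    obtain ⟨hxm, hx⟩ := hx
    simp only [hfib, Finset.mem_filter, Finset.mem_univ, true_and] at hx
    have hmx : m < x := lt_of_le_of_ne (hx ▸ hq.fmin_le x) (by simpa [eq_comm] using hxm)
    have hqx : q x = -1 := by
      apply hq.q_neg
      intro h
      exact hxm (by rw [← hx, hq.fmin_eq_self h])
    have hle : Ssum q m.val ≤ Ssum q (x.val + 1) := by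
      have := hq.fmin_S_le x; rwa [hx] at this
    have hmn : m.val + 1 < n := by
      have := x.isLt; have := Fin.lt_def.mp hmx; omega
    have hlt : Ssum q (x.val + 1) < Ssum q (m.val + 1) := by
      have := hq.S_between hqx (x := x) (y := ⟨m.val + 1, hmn⟩)
        (by rw [hx]; simp [Fin.lt_def]) (by simp [Fin.le_def]; exact Fin.lt_def.mp hmx)
      simpa using this
    exact ⟨hmx, hqx, hle, by omega⟩
  have hcard : (fiber.erase m).card = (Finset.Ico (Ssum q m.val) (Ssum q m.val + q m)).card := by
    apply Finset.card_bij (fun x _ => Ssum q (x.val + 1))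
    · intro x hx
      obtain ⟨h1, h2, h3, h4⟩ := hfacts x hx
      rw [Finset.mem_Ico]
      exact ⟨h3, h4⟩
    · intro x hx x' hx' heq
      obtain ⟨h1, h2, -, -⟩ := hfacts x hx
      obtain ⟨h1', h2', -, -⟩ := hfacts x' hx'
      have key : ∀ a b : Fin n, a ∈ fiber.erase m → b ∈ fiber.erase m → a < b →
          Ssum q (b.val + 1) < Ssum q (a.val + 1) := by
        intro a b ha hb hab
        obtain ⟨ha1, -, -, -⟩ := hfacts a ha
        obtain ⟨-, hb2, -, -⟩ := hfacts b hb
        have han : a.val + 1 < n := by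
          have := b.isLt; have := Fin.lt_def.mp hab; omega
        have := hq.S_between hb2 (x := b) (y := ⟨a.val + 1, han⟩)
          (by simp only [hfib, Finset.mem_erase, Finset.mem_filter] at hb
              rw [hb.2.2]; simp only [Fin.lt_def]; have := Fin.lt_def.mp ha1; omega)
          (by simp only [Fin.le_def]; exact Fin.lt_def.mp hab)
        simpa using this
      rcases lt_trichotomy x x' with h | h | h
      · exact absurd (key x x' hx hx' h) (by omega)
      · exact h
      · exact absurd (key x' x hx' hx h) (by omega)
    · intro j hj
      rw [Finset.mem_Ico] at hj
      have hjnn : 0 ≤ j := le_trans (hq.S_nonneg (le_of_lt m.isLt)) hj.1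
      have hex : ∃ k, m.val < k ∧ k ≤ n ∧ Ssum q k ≤ j :=
        ⟨n, m.isLt, le_refl n, by rw [hq.2.2]; exact hjnn⟩
      obtain ⟨k0, ⟨hk1, hk2, hk3⟩, hmin⟩ :
          ∃ k0, (m.val < k0 ∧ k0 ≤ n ∧ Ssum q k0 ≤ j) ∧
            ∀ k < k0, ¬(m.val < k ∧ k ≤ n ∧ Ssum q k ≤ j) :=
        ⟨Nat.find hex, Nat.find_spec hex, fun k hk => Nat.find_min hex hk⟩
      have hk0m : m.val + 2 ≤ k0 := by
        by_contra hcon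
        have hkeq : k0 = m.val + 1 := by omega
        rw [hkeq, hSm1] at hk3
        omega
      obtain ⟨x, hxval⟩ : ∃ x : Fin n, x.val = k0 - 1 := ⟨⟨k0 - 1, by omega⟩, rfl⟩
      have hxk : x.val + 1 = k0 := by omega
      have hSx : j < Ssum q x.val := by
        by_contra hcon
        push_neg at hcon
        exact hmin x.val (by omega) ⟨by omega, by omega, hcon⟩
      have hstep : Ssum q (x.val + 1) = Ssum q x.val + q x := by
        have := Ssum_succ q x.isLt
        simpa using this
      have hSk0 : Ssum q (x.val + 1) ≤ j := by rw [hxk]; exact hk3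
      have hqx : q x = -1 := hq.q_neg (by omega)
      have hSx1 : Ssum q (x.val + 1) = j := by omega
      have hmem : m ∈ Fset q x := by
        simp only [Fset, Finset.mem_filter, Finset.mem_univ, true_and]
        exact ⟨by rw [Fin.le_def]; omega, by omega, by omega⟩
      have hfx : fmin q x = m := by
        apply le_antisymm
        · rw [fmin, dif_pos (hq.Fset_nonempty x)]
          apply Finset.max'_le
          intro y hy
          simp only [Fset, Finset.mem_filter, Finset.mem_univ, true_and] at hy
          by_contra hcon
          push_neg at hcon
          have hy1 := Fin.le_def.mp hy.1
          exact hmin y.val (by omega)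
            ⟨Fin.lt_def.mp hcon, le_of_lt y.isLt, by omega⟩
        · exact hq.le_fmin hmem
      refine ⟨x, ?_, hSx1⟩
      rw [Finset.mem_erase]
      refine ⟨by rw [Fin.ne_iff_vne]; omega, by simp [hfib, hfx]⟩
  have hsplit : fiber.card = (fiber.erase m).card + 1 := by
    rw [Finset.card_erase_of_mem hmfib]
    have : 1 ≤ fiber.card := Finset.card_pos.mpr ⟨m, hmfib⟩
    omega
  rw [hsplit, hcard, Int.card_Ico]
  push_cast [Int.toNat_of_nonneg (by omega : (0:ℤ) ≤ Ssum q m.val + q m - Ssum q m.val)]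
  ring

lemma Luk.Psi_Phi {q : Fin n → ℤ} (hq : Luk q) : Psi (Phi q) = q := by
  funext m
  have hVmem : (Finset.univ.filter (fun y => fmin q y = fmin q m)) ∈ Phi q :=
    Finset.mem_image.mpr ⟨m, Finset.mem_univ m, rfl⟩
  have hmV : m ∈ Finset.univ.filter (fun y => fmin q y = fmin q m) := by simp
  have hblock : blockOf (Phi q) m = Finset.univ.filter (fun y => fmin q y = fmin q m) :=
    blockOf_eq hq.Phi_isPartition hVmem hmV
  show (if ∀ x ∈ blockOf (Phi q) m, m ≤ x then ((blockOf (Phi q) m).card : ℤ) - 1 else -1) = q m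
  rw [hblock]
  by_cases h : 0 ≤ q m
  · have hfm : fmin q m = m := hq.fmin_eq_self h
    rw [if_pos]
    · rw [hfm]
      have := hq.card_fiber h
      omega
    · intro x hx
      simp only [Finset.mem_filter, Finset.mem_univ, true_and, hfm] at hx
      exact hx ▸ hq.fmin_le x
  · have hfm : fmin q m < m := hq.fmin_lt h
    rw [if_neg, hq.q_neg h]
    intro hall
    have hmem : fmin q m ∈ Finset.univ.filter (fun y => fmin q y = fmin q m) := by
      simp [hq.fmin_idem m]
    exact absurd (hall _ hmem) (not_le.mpr hfm)

/-! ### From partitions to paths -/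

/-- The minimum of the block of `x` in `P`. -/
def minB (P : Finset (Finset (Fin n))) (x : Fin n) : Fin n :=
  if h : (blockOf P x).Nonempty then (blockOf P x).min' h else x

/-- Counting set: elements `≥ k` whose block minimum is `< k`. -/
def Aset (P : Finset (Finset (Fin n))) (j : ℕ) : Finset (Fin n) :=
  Finset.univ.filter (fun x : Fin n => j ≤ x.val ∧ (minB P x).val < j)

section Partition

variable {P : Finset (Finset (Fin n))} (hP : IsPartition P)
include hP

lemma block_spec (x : Fin n) : blockOf P x ∈ P ∧ x ∈ blockOf P x := by
  obtain ⟨V, ⟨hV, hxV⟩, -⟩ := hP.2 x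
  rw [blockOf_eq hP hV hxV]
  exact ⟨hV, hxV⟩

lemma block_nonempty (x : Fin n) : (blockOf P x).Nonempty :=
  ⟨x, (block_spec hP x).2⟩

lemma minB_def (x : Fin n) : minB P x = (blockOf P x).min' (block_nonempty hP x) := by
  rw [minB, dif_pos (block_nonempty hP x)]

lemma minB_mem (x : Fin n) : minB P x ∈ blockOf P x := by
  rw [minB_def hP]; exact Finset.min'_mem _ _

lemma minB_le (x : Fin n) : minB P x ≤ x := by
  rw [minB_def hP]; exact Finset.min'_le _ _ (block_spec hP x).2

lemma minB_le_mem {x y : Fin n} (hy : y ∈ blockOf P x) : minB P x ≤ y := by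
  rw [minB_def hP]; exact Finset.min'_le _ _ hy

lemma block_eq_of_mem {x y : Fin n} (hy : y ∈ blockOf P x) :
    blockOf P y = blockOf P x :=
  blockOf_eq hP (block_spec hP x).1 hy

lemma minB_congr {x y : Fin n} (h : blockOf P x = blockOf P y) :
    minB P x = minB P y := by
  rw [minB_def hP, minB_def hP]
  exact le_antisymm (Finset.min'_le _ _ (by rw [h]; exact Finset.min'_mem _ _))
    (Finset.min'_le _ _ (by rw [← h]; exact Finset.min'_mem _ _))

lemma minB_idem (x : Fin n) : minB P (minB P x) = minB P x :=
  minB_congr hP (block_eq_of_mem hP (minB_mem hP x))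

lemma minB_eq_iff {x y : Fin n} : minB P y = minB P x ↔ y ∈ blockOf P x := by
  constructor
  · intro h
    have h1 : minB P y ∈ blockOf P y := minB_mem hP y
    have h2 : minB P y ∈ blockOf P x := h ▸ minB_mem hP x
    have : blockOf P y = blockOf P x :=
      ((hP.2 (minB P y)).unique ⟨(block_spec hP y).1, h1⟩ ⟨(block_spec hP x).1, h2⟩)
    exact this ▸ (block_spec hP y).2
  · intro h
    exact minB_congr hP (block_eq_of_mem hP h)

lemma minB_eq_self_of_min {x e : Fin n} (h : minB P x = e) : minB P e = e := by
  have : e ∈ blockOf P x := h ▸ minB_mem hP x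
  rw [← h, minB_idem hP]

lemma Psi_eq_of_min {e : Fin n} (he : minB P e = e) :
    Psi P e = ((blockOf P e).card : ℤ) - 1 := by
  rw [Psi, if_pos]
  intro x hx
  exact he ▸ minB_le_mem hP hx

lemma Psi_eq_of_not_min {e : Fin n} (he : minB P e ≠ e) : Psi P e = -1 := by
  rw [Psi, if_neg]
  intro hall
  exact he (le_antisymm (minB_le hP e) (hall _ (minB_mem hP e)))

/-- The counting set whose cardinality is the partial sum of `Psi P`. -/
lemma S_eq_card : ∀ k ≤ n, Ssum (Psi P) k = ((Aset P k).card : ℤ) := by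
  intro k
  induction k with
  | zero => intro _; simp [Ssum_zero, Aset]
  | succ k ih =>
    intro hk1
    have hk : k < n := hk1
    rw [Ssum_succ (Psi P) hk, ih (le_of_lt hk)]
    set e : Fin n := ⟨k, hk⟩ with hedef
    have heval : e.val = k := rfl
    by_cases he : minB P e = e
    · -- e starts a new block
      have hsplit : Aset P (k+1) = Aset P k ∪ ((blockOf P e).erase e) := by
        ext x
        simp only [Aset, Finset.mem_filter, Finset.mem_univ, true_and,
          Finset.mem_union, Finset.mem_erase]
        constructor
        · rintro ⟨hx1, hx2⟩
          rcases Nat.lt_or_ge (minB P x).val k with hlt | hge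
          · exact Or.inl ⟨by omega, hlt⟩
          · have hmx : minB P x = e := Fin.ext (by omega)
            refine Or.inr ⟨?_, (minB_eq_iff hP).mp (by rw [hmx, he])⟩
            intro hxeq
            rw [Fin.ext_iff, heval] at hxeq
            omega
        · rintro (⟨hx1, hx2⟩ | ⟨hxe, hxb⟩)
          · have hxne : x ≠ e := by
              intro h
              rw [h, he, heval] at hx2
              omega
            rw [Fin.ne_iff_vne, heval] at hxne
            exact ⟨by omega, by omega⟩
          · have hmx : minB P x = e := by
              rw [← he]
              exact (minB_eq_iff hP).mpr hxb
            have hex : e < x :=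
              lt_of_le_of_ne (he ▸ minB_le_mem hP hxb) (Ne.symm hxe)
            rw [Fin.lt_def, heval] at hex
            exact ⟨by omega, by rw [hmx, heval]; omega⟩
      have hdisj : Disjoint (Aset P k) ((blockOf P e).erase e) := by
        rw [Finset.disjoint_left]
        intro x hx1 hx2
        simp only [Aset, Finset.mem_filter, Finset.mem_univ, true_and] at hx1
        rw [Finset.mem_erase] at hx2
        have hmx : minB P x = e := by
          rw [← he]
          exact (minB_eq_iff hP).mpr hx2.2
        rw [hmx, heval] at hx1
        omega
      have hcard : (blockOf P e).card ≠ 0 := by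
        exact Finset.card_ne_zero_of_mem (block_spec hP e).2
      rw [hsplit, Finset.card_union_of_disjoint hdisj,
        Finset.card_erase_of_mem (block_spec hP e).2, Psi_eq_of_min hP he]
      push_cast
      omega
    · -- e is not the minimum of its block
      have hme : minB P e < e := lt_of_le_of_ne (minB_le hP e) he
      rw [Fin.lt_def, heval] at hme
      have hsplit : Aset P (k+1) = (Aset P k).erase e := by
        ext x
        simp only [Aset, Finset.mem_filter, Finset.mem_univ, true_and, Finset.mem_erase]
        constructor
        · rintro ⟨hx1, hx2⟩
          have hmx : (minB P x).val ≠ k := by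
            intro h
            have : minB P x = e := Fin.ext (by omega)
            exact he (minB_eq_self_of_min hP this)
          have hxe : x ≠ e := by
            rw [Fin.ne_iff_vne, heval]
            omega
          exact ⟨hxe, by omega, by omega⟩
        · rintro ⟨hxe, hx1, hx2⟩
          rw [Fin.ne_iff_vne, heval] at hxe
          exact ⟨by omega, by omega⟩
      have heA : e ∈ Aset P k := by
        simp only [Aset, Finset.mem_filter, Finset.mem_univ, true_and, heval]
        omega
      have hcard : (Aset P k).card ≠ 0 := Finset.card_ne_zero_of_mem heA
      rw [hsplit, Finset.card_erase_of_mem heA, Psi_eq_of_not_min hP he]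
      push_cast [Nat.cast_sub (by omega : 1 ≤ (Aset P k).card)]
      omega

lemma Psi_Luk : Luk (Psi P) := by
  refine ⟨?_, ?_, ?_⟩
  · intro i
    by_cases h : minB P i = i
    · rw [Psi_eq_of_min hP h]
      have : (blockOf P i).card ≠ 0 := Finset.card_ne_zero_of_mem (block_spec hP i).2
      omega
    · rw [Psi_eq_of_not_min hP h]
  · intro m
    rw [S_eq_card hP _ m.isLt]
    positivity
  · rw [S_eq_card hP n le_rfl]
    have : Aset P n = ∅ := by
      ext x
      simp only [Aset, Finset.mem_filter, Finset.mem_univ, true_and,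
        Finset.notMem_empty, iff_false]
      intro h
      exact absurd h.1 (not_le.mpr x.isLt)
    rw [this]
    simp

end Partition

section NC

variable {P : Finset (Finset (Fin n))} (hP : IsPartition P) (hNC : IsNC P)
include hP hNC

lemma S_min_le {x : Fin n} (hx : minB P x < x) :
    Ssum (Psi P) (minB P x).val ≤ Ssum (Psi P) (x.val + 1) := by
  rw [S_eq_card hP _ (le_of_lt (minB P x).isLt),
    S_eq_card hP _ (by have := x.isLt; omega)]
  have hsub : Aset P (minB P x).val ⊆ Aset P (x.val + 1) := by
    intro z hz
    simp only [Aset, Finset.mem_filter, Finset.mem_univ, true_and] at hz ⊢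
    have hvx : (minB P x).val ≤ x.val := Fin.le_def.mp (minB_le hP x)
    refine ⟨?_, by omega⟩
    by_contra hcon
    push_neg at hcon
    have hzx : z ≠ x := by
      intro h
      rw [h] at hz
      omega
    have hzv : z ≠ minB P x := by
      intro h
      have : minB P z = minB P x := h ▸ minB_idem hP x
      omega
    have h1 : minB P x < z := by
      rw [Fin.lt_def]
      have := (Fin.ne_iff_vne _ _).mp hzv
      omega
    have h2 : z < x := by
      rw [Fin.lt_def]
      have := (Fin.ne_iff_vne _ _).mp hzx
      omega
    have hbne : blockOf P z ≠ blockOf P x := by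
      intro h
      have := minB_congr hP h
      omega
    exact hNC ⟨blockOf P z, (block_spec hP z).1, blockOf P x, (block_spec hP x).1, hbne,
      minB P z, minB P x, z, x, by rw [Fin.lt_def]; omega, h1, h2,
      minB_mem hP z, (block_spec hP z).2, minB_mem hP x, (block_spec hP x).2⟩
  exact_mod_cast Finset.card_le_card hsub

lemma S_between_P {x y : Fin n} (hx : minB P x < x) (h1 : minB P x < y) (h2 : y ≤ x) :
    Ssum (Psi P) (x.val + 1) < Ssum (Psi P) y.val := by
  rw [S_eq_card hP _ (by have := x.isLt; omega), S_eq_card hP _ (le_of_lt y.isLt)]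
  have hsub : Aset P (x.val + 1) ⊆ Aset P y.val := by
    intro z hz
    simp only [Aset, Finset.mem_filter, Finset.mem_univ, true_and] at hz ⊢
    have hyx : y.val ≤ x.val := Fin.le_def.mp h2
    refine ⟨by omega, ?_⟩
    by_contra hcon
    push_neg at hcon
    have hvy : (minB P x).val < y.val := Fin.lt_def.mp h1
    have hwx : minB P z ≠ x := by
      intro h
      have := minB_eq_self_of_min hP h
      have := Fin.lt_def.mp hx
      omega
    have hwxv : (minB P z).val < x.val := by
      have := (Fin.ne_iff_vne _ _).mp hwx
      omega
    have hbne : blockOf P x ≠ blockOf P z := by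
      intro h
      have := minB_congr hP h
      omega
    exact hNC ⟨blockOf P x, (block_spec hP x).1, blockOf P z, (block_spec hP z).1, hbne,
      minB P x, minB P z, x, z, by rw [Fin.lt_def]; omega, by rw [Fin.lt_def]; omega,
      by rw [Fin.lt_def]; omega,
      minB_mem hP x, (block_spec hP x).2, minB_mem hP z, (block_spec hP z).2⟩
  have hxmem : x ∈ Aset P y.val := by
    simp only [Aset, Finset.mem_filter, Finset.mem_univ, true_and]
    exact ⟨Fin.le_def.mp h2, Fin.lt_def.mp h1⟩
  have hxnot : x ∉ Aset P (x.val + 1) := by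
    simp only [Aset, Finset.mem_filter, Finset.mem_univ, true_and]
    rintro ⟨h, -⟩
    omega
  exact_mod_cast Finset.card_lt_card
    ((Finset.ssubset_iff_of_subset hsub).mpr ⟨x, hxmem, hxnot⟩)

lemma fmin_eq_minB (x : Fin n) : fmin (Psi P) x = minB P x := by
  have hq : Luk (Psi P) := Psi_Luk hP
  by_cases h : minB P x = x
  · rw [h]
    apply hq.fmin_eq_self
    rw [Psi_eq_of_min hP h]
    have : (blockOf P x).card ≠ 0 := Finset.card_ne_zero_of_mem (block_spec hP x).2
    omega
  · have hlt : minB P x < x := lt_of_le_of_ne (minB_le hP x) h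
    have hqx : Psi P x = -1 := Psi_eq_of_not_min hP h
    have hstep : Ssum (Psi P) (x.val + 1) = Ssum (Psi P) x.val + Psi P x := by
      have := Ssum_succ (Psi P) x.isLt
      simpa using this
    have ha := S_min_le hP hNC hlt
    have hmem : minB P x ∈ Fset (Psi P) x := by
      simp only [Fset, Finset.mem_filter, Finset.mem_univ, true_and]
      exact ⟨minB_le hP x, by omega, by omega⟩
    apply le_antisymm
    · rw [fmin, dif_pos (hq.Fset_nonempty x)]
      apply Finset.max'_le
      intro y hy
      simp only [Fset, Finset.mem_filter, Finset.mem_univ, true_and] at hy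
      by_contra hcon
      push_neg at hcon
      have := S_between_P hP hNC hlt hcon hy.1
      omega
    · exact hq.le_fmin hmem

lemma Phi_Psi : Phi (Psi P) = P := by
  have hfm := fmin_eq_minB hP hNC
  ext V
  simp only [Phi, Finset.mem_image]
  constructor
  · rintro ⟨x, -, rfl⟩
    have hb : Finset.univ.filter (fun y => fmin (Psi P) y = fmin (Psi P) x)
        = blockOf P x := by
      ext y
      simp only [Finset.mem_filter, Finset.mem_univ, true_and, hfm]
      exact minB_eq_iff hP
    rw [hb]
    exact (block_spec hP x).1
  · intro hV
    obtain ⟨x, hx⟩ := Finset.nonempty_iff_ne_empty.mpr (fun h => hP.1 (h ▸ hV))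
    refine ⟨x, Finset.mem_univ x, ?_⟩
    have hbx : blockOf P x = V := blockOf_eq hP hV hx
    ext y
    simp only [Finset.mem_filter, Finset.mem_univ, true_and, hfm]
    rw [minB_eq_iff hP, hbx]

end NC

/-- The restriction of `Ψ` to the non-crossing partitions is a bijection onto the
set `Luk(n)` of Lukasiewicz paths (identified with their rise-vectors). -/
theorem stmt3 (n : ℕ) :
    Set.BijOn (Psi (n := n)) {P | IsPartition P ∧ IsNC P}
      {q : Fin n → ℤ | (∀ i, -1 ≤ q i) ∧
        (∀ m : Fin n, 0 ≤ ∑ i ∈ Finset.univ.filter (fun i => i ≤ m), q i) ∧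
        ∑ i, q i = 0} := by
  have hset : {q : Fin n → ℤ | (∀ i, -1 ≤ q i) ∧
      (∀ m : Fin n, 0 ≤ ∑ i ∈ Finset.univ.filter (fun i => i ≤ m), q i) ∧
      ∑ i, q i = 0} = {q : Fin n → ℤ | Luk q} := by
    ext q
    exact (Luk_iff q).symm
  rw [hset]
  refine ⟨?_, ?_, ?_⟩
  · intro P hP
    exact Psi_Luk hP.1
  · intro P hP P' hP' h
    calc P = Phi (Psi P) := (Phi_Psi hP.1 hP.2).symm
    _ = Phi (Psi P') := by rw [h]
    _ = P' := Phi_Psi hP'.1 hP'.2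
  · intro q hq
    have hq' : Luk q := hq
    exact ⟨Phi q, ⟨hq'.Phi_isPartition, hq'.Phi_isNC⟩, hq'.Psi_Phi⟩
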